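/- Let 0 < α < 1, 0 < δ < 1, B > 0, and set r = δ^{1/(1-α)} and x*_i = B(1-r)·r^i for i ∈ ℕ. Then for every sequence x : ℕ → ℝ with x_i ≥ 0 for all i and ∑_{i≥0} x_i ≤ B (the series being summable), one has ∑_{i≥0} (x_i)^α · δ^i ≤ ∑_{i≥0} (x*_i)^α · δ^i; i.e., the geometric allocation x* is a global maximizer of the discounted power-utility objective over nonnegative sequences whose total mass is at most B. -/

import Mathlib

/-- The geometric allocation `x*_i = B(1-r) r^i`, with `r = δ^(1/(1-α))`, is a
global maximizer of the discounted power-utility objective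
`∑ (x_i)^α δ^i` over nonnegative sequences with total mass at most `B`. -/
theorem geometric_allocation_optimal
    (α δ B : ℝ) (hα0 : 0 < α) (hα1 : α < 1) (hδ0 : 0 < δ) (hδ1 : δ < 1)
    (hB : 0 < B) (r : ℝ) (hr : r = δ ^ (1 / (1 - α)))
    (x : ℕ → ℝ) (hx : ∀ i, 0 ≤ x i) (hsum : Summable x)
    (hle : ∑' i, x i ≤ B) :
    ∑' i, (x i) ^ α * δ ^ i ≤ ∑' i, (B * (1 - r) * r ^ i) ^ α * δ ^ i := by
  have h1α : 0 < 1 - α := by linarith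
  have hr0 : 0 < r := by rw [hr]; positivity
  have hr1 : r < 1 := by
    rw [hr]; exact Real.rpow_lt_one hδ0.le hδ1 (by positivity)
  have h1r : 0 < 1 - r := by linarith
  -- key identity: r ^ α * δ = r
  have hkey : r ^ α * δ = r := by
    rw [hr, ← Real.rpow_mul hδ0.le]
    nth_rewrite 2 [show δ = δ ^ (1 : ℝ) from (Real.rpow_one δ).symm]
    rw [← Real.rpow_add hδ0]
    congr 1
    field_simp
    ring
  -- q-power of geometric weight
  have hgq : ∀ i : ℕ, (δ ^ i) ^ (1 / (1 - α)) = r ^ i := by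
    intro i
    rw [← Real.rpow_natCast δ i, ← Real.rpow_mul hδ0.le, mul_comm,
      Real.rpow_mul hδ0.le, ← hr, Real.rpow_natCast]
  have hpq : (1 / α).HolderConjugate (1 / (1 - α)) := by
    rw [Real.holderConjugate_iff]
    constructor
    · rw [lt_div_iff₀ hα0]; linarith
    · field_simp
      ring
  have hfp : ∀ i, (x i ^ α) ^ (1 / α) = x i := by
    intro i
    rw [← Real.rpow_mul (hx i), mul_one_div_cancel hα0.ne', Real.rpow_one]
  have hfsum : Summable fun i => (x i ^ α) ^ (1 / α) := by
    refine hsum.congr fun i => (hfp i).symm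
  have hgsum : Summable fun i => (δ ^ i) ^ (1 / (1 - α)) := by
    refine (summable_geometric_of_lt_one hr0.le hr1).congr fun i => (hgq i).symm
  -- Hölder
  have hHolder := Real.inner_le_Lp_mul_Lq_tsum_of_nonneg hpq
    (f := fun i => x i ^ α) (g := fun i => δ ^ i)
    (fun i => Real.rpow_nonneg (hx i) α) (fun i => by positivity) hfsum hgsum
  simp only [hfp, hgq] at hHolder
  rw [one_div_one_div, one_div_one_div, tsum_geometric_of_lt_one hr0.le hr1] at hHolder
  -- RHS value
  have hRHS : ∑' i, (B * (1 - r) * r ^ i) ^ α * δ ^ i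
      = (B * (1 - r)) ^ α * (1 - r)⁻¹ := by
    have hterm : ∀ i : ℕ, (B * (1 - r) * r ^ i) ^ α * δ ^ i
        = (B * (1 - r)) ^ α * r ^ i := by
      intro i
      rw [Real.mul_rpow (by positivity) (by positivity), mul_assoc]
      congr 1
      rw [← Real.rpow_natCast r i, ← Real.rpow_mul hr0.le, mul_comm (i : ℝ) α,
        Real.rpow_mul hr0.le, Real.rpow_natCast, Real.rpow_natCast,
        ← mul_pow, hkey]
    rw [tsum_congr hterm, tsum_mul_left, tsum_geometric_of_lt_one hr0.le hr1]
  rw [hRHS]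
  refine hHolder.trans ?_
  have h2 : (∑' i, x i) ^ α ≤ B ^ α := by
    refine Real.rpow_le_rpow (tsum_nonneg hx) hle hα0.le
  calc (∑' i, x i) ^ α * (1 - r)⁻¹ ^ (1 - α)
      ≤ B ^ α * (1 - r)⁻¹ ^ (1 - α) := by
        refine mul_le_mul_of_nonneg_right h2 (Real.rpow_nonneg (by positivity) _)
    _ = (B * (1 - r)) ^ α * (1 - r)⁻¹ := by
        rw [Real.mul_rpow hB.le h1r.le, Real.inv_rpow h1r.le, mul_assoc]
        congr 1
        rw [← Real.rpow_neg h1r.le, ← Real.rpow_neg_one (1 - r),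
          ← Real.rpow_add h1r]
        congr 1
        ring
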